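/- The system ℏα' = −3βℏ/2, ℏβ' = −12γ, ℏγ' = −9(336t₂² − 160αβ + 1800t₂β² + 1925β⁴ − 560δ)/12320, ℏδ' = (103680t₂βγ − 12000αγ + 311850β³γ + 728t₂ℏ − 4665β²ℏ)/1890 implies the single fourth-order ODE ℏ² α⁽⁴⁾ + 40(α')³α'' + 36t₂ α'α'' + 4α α'' + 20(α')² + 6t₂ = 0 for α as a function of t₂. -/

import Mathlib

set_option maxHeartbeats 1000000

/-- The first-order system for `(α,β,γ,δ)` coming from the singularity reduction of
the Garnier system of type 9/2 implies the single fourth-order ODE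
`ℏ²α⁽⁴⁾ + 40(α')³α'' + 36t₂α'α'' + 4αα'' + 20(α')² + 6t₂ = 0`. -/
theorem stmt9 (ℏ : ℂ) (hℏ : ℏ ≠ 0) (α β γ δ : ℂ → ℂ)
    (hα : Differentiable ℂ α) (hβ : Differentiable ℂ β)
    (hγ : Differentiable ℂ γ) (hδ : Differentiable ℂ δ)
    (h1 : ∀ t, ℏ * deriv α t = -3 * β t * ℏ / 2)
    (h2 : ∀ t, ℏ * deriv β t = -12 * γ t)
    (h3 : ∀ t, ℏ * deriv γ t =
      -9 * (336 * t ^ 2 - 160 * α t * β t + 1800 * t * (β t) ^ 2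
        + 1925 * (β t) ^ 4 - 560 * δ t) / 12320)
    (h4 : ∀ t, ℏ * deriv δ t =
      (103680 * t * β t * γ t - 12000 * α t * γ t + 311850 * (β t) ^ 3 * γ t
        + 728 * t * ℏ - 4665 * (β t) ^ 2 * ℏ) / 1890) :
    ∀ t, ℏ ^ 2 * iteratedDeriv 4 α t
      + 40 * (deriv α t) ^ 3 * iteratedDeriv 2 α t
      + 36 * t * deriv α t * iteratedDeriv 2 α t
      + 4 * α t * iteratedDeriv 2 α t
      + 20 * (deriv α t) ^ 2 + 6 * t = 0 := by
  have hA' : ∀ t, HasDerivAt α (-(3/2) * β t) t := fun t => by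
    have hd : deriv α t = -(3/2) * β t :=
      mul_left_cancel₀ hℏ (by linear_combination h1 t)
    have := (hα t).hasDerivAt
    rwa [hd] at this
  have hB' : ∀ t, HasDerivAt β (-12/ℏ * γ t) t := fun t => by
    have hd : deriv β t = -12/ℏ * γ t := by
      field_simp
      linear_combination h2 t
    have := (hβ t).hasDerivAt
    rwa [hd] at this
  have hC' : ∀ t, HasDerivAt γ (-9/(12320*ℏ) *
      (336*t^2 - 160*(α t*β t) + 1800*(t*(β t)^2) + 1925*(β t)^4 - 560*δ t)) t := fun t => by
    have hd : deriv γ t = -9/(12320*ℏ) *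
        (336*t^2 - 160*(α t*β t) + 1800*(t*(β t)^2) + 1925*(β t)^4 - 560*δ t) := by
      field_simp
      linear_combination 12320 * h3 t
    have := (hγ t).hasDerivAt
    rwa [hd] at this
  have hD' : ∀ t, HasDerivAt δ ((103680*(t*(β t*γ t)) - 12000*(α t*γ t)
      + 311850*((β t)^3*γ t) + 728*(t*ℏ) - 4665*((β t)^2*ℏ))/(1890*ℏ)) t := fun t => by
    have hd : deriv δ t = (103680*(t*(β t*γ t)) - 12000*(α t*γ t)
        + 311850*((β t)^3*γ t) + 728*(t*ℏ) - 4665*((β t)^2*ℏ))/(1890*ℏ) := by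
      field_simp
      linear_combination 1890 * h4 t
    have := (hδ t).hasDerivAt
    rwa [hd] at this
  have e1 : deriv α = fun t => -(3/2) * β t := funext fun t => (hA' t).deriv
  have e2 : deriv (fun t => -(3/2) * β t) = fun t => -(3/2) * (-12/ℏ * γ t) :=
    funext fun t => ((hB' t).const_mul (-(3/2))).deriv
  have e3 : deriv (fun t => -(3/2) * (-12/ℏ * γ t)) = fun t =>
      -(3/2) * (-12/ℏ * (-9/(12320*ℏ) *
      (336*t^2 - 160*(α t*β t) + 1800*(t*(β t)^2) + 1925*(β t)^4 - 560*δ t))) :=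
    funext fun t => (((hC' t).const_mul (-12/ℏ)).const_mul (-(3/2))).deriv
  have i4 : iteratedDeriv 4 α = deriv (deriv (deriv (deriv α))) := by
    rw [show (4:ℕ) = 3+1 from rfl, iteratedDeriv_succ, show (3:ℕ) = 2+1 from rfl,
      iteratedDeriv_succ, show (2:ℕ) = 1+1 from rfl, iteratedDeriv_succ, iteratedDeriv_one]
  have i2 : iteratedDeriv 2 α = deriv (deriv α) := by
    rw [show (2:ℕ) = 1+1 from rfl, iteratedDeriv_succ, iteratedDeriv_one]
  intro t
  rw [i4, i2, e1, e2, e3]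
  have hgd : HasDerivAt (fun x => -(3/2) * (-12/ℏ * (-9/(12320*ℏ) *
      (336*x^2 - 160*(α x*β x) + 1800*(x*(β x)^2) + 1925*(β x)^4 - 560*δ x))))
      (-(3/2) * (-12/ℏ * (-9/(12320*ℏ) *
      (336*(2*t) - 160*((-(3/2)*β t)*β t + α t*(-12/ℏ*γ t))
      + 1800*((β t)^2 + t*(2*β t*(-12/ℏ*γ t)))
      + 1925*(4*(β t)^3*(-12/ℏ*γ t))
      - 560*((103680*(t*(β t*γ t)) - 12000*(α t*γ t)
        + 311850*((β t)^3*γ t) + 728*(t*ℏ) - 4665*((β t)^2*ℏ))/(1890*ℏ)))))) t := by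
    have hin := (((((hasDerivAt_pow 2 t).const_mul (336:ℂ)).sub
      (((hA' t).mul (hB' t)).const_mul 160)).add
      (((hasDerivAt_id' t).mul ((hB' t).pow 2)).const_mul 1800)).add
      (((hB' t).pow 4).const_mul 1925)).sub ((hD' t).const_mul 560)
    have h := ((hin.const_mul (-9/(12320*ℏ))).const_mul (-12/ℏ)).const_mul (-(3/2))
    refine HasDerivAt.congr_deriv h ?_
    push_cast
    simp only [Pi.pow_apply]
    ring
  rw [hgd.deriv]
  field_simp
  ring_nf
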